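/- Let f : ℝ^d → ℝ be Lipschitz continuous with respect to the sup norm and SISTr, and let ℓ ∈ ℝ. Then for every x ∈ ℝ^d there exists a unique real number c_x such that f(x + c_x) = ℓ, and the function x ↦ c_x is continuous on ℝ^d. -/
import Mathlib


/-- `g` is strictly increasing under scalar translation (SISTr) at `x`:
the map `c ↦ g(x + c)` (adding `c` to every component) is strictly increasing
and maps `ℝ` onto `ℝ`. -/
def SISTrAt {d : ℕ} (g : (Fin d → ℝ) → ℝ) (x : Fin d → ℝ) : Prop :=
  StrictMono (fun c : ℝ => g (fun i => x i + c)) ∧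
    Function.Surjective (fun c : ℝ => g (fun i => x i + c))

/-- `g` is SISTr if it is SISTr at every point. -/
def SISTr {d : ℕ} (g : (Fin d → ℝ) → ℝ) : Prop :=
  ∀ x : Fin d → ℝ, SISTrAt g x

/-- If `f : ℝ^d → ℝ` is Lipschitz (w.r.t. the sup norm) and SISTr, then for
every `x` there is a unique `c_x` with `f(x + c_x) = ℓ`, and `x ↦ c_x` is
continuous. -/
theorem statement0 {d : ℕ} (hd : 1 ≤ d) (f : (Fin d → ℝ) → ℝ)
    (hLip : ∃ L : ℝ, ∀ x y : Fin d → ℝ, |f x - f y| ≤ L * ‖x - y‖)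
    (hS : SISTr f) (ℓ : ℝ) :
    ∃ C : (Fin d → ℝ) → ℝ, Continuous C ∧
      (∀ x : Fin d → ℝ, f (fun i => x i + C x) = ℓ) ∧
      (∀ (x : Fin d → ℝ) (c : ℝ), f (fun i => x i + c) = ℓ → c = C x) := by
  obtain ⟨L, hL⟩ := hLip
  set L' : ℝ := max L 1 with hL'def
  have hL'pos : (0:ℝ) < L' := lt_of_lt_of_le one_pos (le_max_right _ _)
  have hL2 : ∀ x y : Fin d → ℝ, |f x - f y| ≤ L' * ‖x - y‖ := by
    intro x y
    refine (hL x y).trans ?_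
    have := norm_nonneg (x - y)
    nlinarith [le_max_left L 1]
  choose C hC using fun x => (hS x).2 ℓ
  have key : ∀ (x y : Fin d → ℝ) (c : ℝ),
      (fun i => y i + c) - (fun i => x i + c) = y - x := by
    intro x y c; funext i; simp [Pi.sub_apply]
  refine ⟨C, ?_, hC, fun x c h => (hS x).1.injective (h.trans (hC x).symm)⟩
  rw [continuous_iff_continuousAt]
  intro x
  rw [Metric.continuousAt_iff]
  intro ε hε
  set a := f (fun i => x i + (C x - ε)) with ha
  set b := f (fun i => x i + (C x + ε)) with hb
  have haℓ : a < ℓ := by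
    have := (hS x).1 (show C x - ε < C x by linarith)
    simpa [hC x] using this
  have hℓb : ℓ < b := by
    have := (hS x).1 (show C x < C x + ε by linarith)
    simpa [hC x] using this
  refine ⟨min ((ℓ - a) / L') ((b - ℓ) / L'), lt_min (div_pos (by linarith) hL'pos) (div_pos (by linarith) hL'pos), ?_⟩
  intro y hy
  have hdist : ‖y - x‖ < min ((ℓ - a) / L') ((b - ℓ) / L') := by
    rwa [dist_eq_norm] at hy
  have h1 : f (fun i => y i + (C x - ε)) < ℓ := by
    have hb1 := hL2 (fun i => y i + (C x - ε)) (fun i => x i + (C x - ε))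
    rw [key] at hb1
    have : L' * ‖y - x‖ < ℓ - a := by
      have := (min_le_left ((ℓ - a) / L') ((b - ℓ) / L')).trans_lt' hdist
      calc L' * ‖y - x‖ < L' * ((ℓ - a) / L') := by
            exact (mul_lt_mul_iff_right₀ hL'pos).2 (hdist.trans_le (min_le_left _ _))
        _ = ℓ - a := by field_simp
    have := abs_le.mp hb1
    linarith [this.2]
  have h2 : ℓ < f (fun i => y i + (C x + ε)) := by
    have hb1 := hL2 (fun i => y i + (C x + ε)) (fun i => x i + (C x + ε))
    rw [key] at hb1
    have : L' * ‖y - x‖ < b - ℓ := by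
      calc L' * ‖y - x‖ < L' * ((b - ℓ) / L') := by
            exact (mul_lt_mul_iff_right₀ hL'pos).2 (hdist.trans_le (min_le_right _ _))
        _ = b - ℓ := by field_simp
    have := abs_le.mp hb1
    linarith [this.1]
  have hlo : C x - ε < C y := by
    have := ((hS y).1.lt_iff_lt (a := C x - ε) (b := C y)).mp
    apply ((hS y).1.lt_iff_lt).mp
    simpa [hC y] using h1
  have hhi : C y < C x + ε := by
    apply ((hS y).1.lt_iff_lt).mp
    simpa [hC y] using h2
  rw [Real.dist_eq, abs_lt]
  constructor <;> linarith
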